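/- For any Banach space X and free ultrafilter U on ℕ, the ultrapower X_U satisfies n(X_U) ≤ n(X). -/

import Mathlib

open Filter Metric ENNReal

noncomputable def nradius {E : Type*} [SeminormedAddCommGroup E] [NormedSpace ℝ E]
    (T : E →L[ℝ] E) : ℝ :=
  sSup {r : ℝ | ∃ (x : E) (f : E →L[ℝ] ℝ), ‖x‖ = 1 ∧ ‖f‖ = 1 ∧ f x = 1 ∧ r = |f (T x)|}

noncomputable def nindex (E : Type*) [SeminormedAddCommGroup E] [NormedSpace ℝ E] : ℝ :=
  sInf {r : ℝ | ∃ T : E →L[ℝ] E, ‖T‖ = 1 ∧ r = nradius T}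

noncomputable def nullIdeal (X : ℕ → Type*) [∀ n, NormedAddCommGroup (X n)]
    [∀ n, NormedSpace ℝ (X n)] (U : Ultrafilter ℕ) : Submodule ℝ (lp X ∞) where
  carrier := {f | Tendsto (fun n => ‖f n‖) (U : Filter ℕ) (nhds 0)}
  zero_mem' := by
    simpa using (tendsto_const_nhds : Tendsto (fun _ : ℕ => (0 : ℝ)) (U : Filter ℕ) (nhds 0))
  add_mem' := by
    intro f g hf hg
    have h := hf.add hg
    rw [add_zero] at h
    refine squeeze_zero (fun n => norm_nonneg _) (fun n => ?_) h
    simpa using norm_add_le (f n) (g n)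
  smul_mem' := by
    intro c f hf
    have h := hf.const_mul ‖c‖
    rw [mul_zero] at h
    refine squeeze_zero (fun n => norm_nonneg _) (fun n => ?_) h
    simp [norm_smul]

section Aux

lemma nradius_nonneg {E : Type*} [SeminormedAddCommGroup E] [NormedSpace ℝ E]
    (T : E →L[ℝ] E) : 0 ≤ nradius T := by
  apply Real.sSup_nonneg
  rintro r ⟨x, f, _, _, _, rfl⟩
  positivity

lemma abs_le_nradius {E : Type*} [SeminormedAddCommGroup E] [NormedSpace ℝ E]
    (T : E →L[ℝ] E) {z : E} {g : E →L[ℝ] ℝ}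
    (hz : ‖z‖ = 1) (hg : ‖g‖ = 1) (hgz : g z = 1) : |g (T z)| ≤ nradius T := by
  apply le_csSup
  · refine ⟨‖T‖, ?_⟩
    rintro r ⟨x, f, hx, hf, _, rfl⟩
    calc |f (T x)| = ‖f (T x)‖ := (Real.norm_eq_abs _).symm
      _ ≤ ‖f‖ * ‖T x‖ := f.le_opNorm _
      _ ≤ ‖f‖ * (‖T‖ * ‖x‖) := by gcongr; exact T.le_opNorm x
      _ = ‖T‖ := by rw [hf, hx]; ring
  · exact ⟨z, g, hz, hg, hgz, rfl⟩

lemma dual_pair_bound {E : Type*} [SeminormedAddCommGroup E] [NormedSpace ℝ E]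
    (g : E →L[ℝ] ℝ) (v : E) : g v ≤ ‖g‖ * ‖v‖ :=
  (le_abs_self _).trans ((Real.norm_eq_abs _).symm.le.trans (g.le_opNorm v))

/-- Key estimate: if all exact states of `S` are `≤ ρ`, then `‖1 + t S‖ ≤ 1 + t (ρ + 2t)`. -/
lemma norm_one_add_smul_le {X : Type*} [NormedAddCommGroup X] [NormedSpace ℝ X]
    (S : X →L[ℝ] X) (hS : ‖S‖ ≤ 1) {ρ t : ℝ} (hρ : 0 ≤ ρ) (ht : 0 < t) (ht' : t ≤ 1 / 2)
    (hSv : ∀ (z : X) (g : X →L[ℝ] ℝ), ‖z‖ = 1 → ‖g‖ = 1 → g z = 1 → g (S z) ≤ ρ) :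
    ‖(1 : X →L[ℝ] X) + t • S‖ ≤ 1 + t * (ρ + 2 * t) := by
  have hC : (0 : ℝ) ≤ 1 + t * (ρ + 2 * t) := by positivity
  refine ContinuousLinearMap.opNorm_le_bound _ hC fun x => ?_
  have happ : ((1 : X →L[ℝ] X) + t • S) x = x + t • S x := by
    simp [ContinuousLinearMap.add_apply]
  rw [happ]
  rcases eq_or_ne x 0 with rfl | hx
  · simp
  have hxn : (0 : ℝ) < ‖x‖ := norm_pos_iff.mpr hx
  set u : X := ‖x‖⁻¹ • x with hu
  have hun : ‖u‖ = 1 := by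
    rw [hu, norm_smul, Real.norm_eq_abs, abs_of_pos (inv_pos.mpr hxn),
      inv_mul_cancel₀ hxn.ne']
  have main : ‖u + t • S u‖ ≤ 1 + t * (ρ + 2 * t) := by
    set y : X := u + t • S u with hy
    have hSu : ‖S u‖ ≤ 1 := by
      calc ‖S u‖ ≤ ‖S‖ * ‖u‖ := S.le_opNorm u
        _ ≤ 1 := by rw [hun, mul_one]; exact hS
    have htSu : ‖t • S u‖ ≤ t := by
      rw [norm_smul, Real.norm_eq_abs, abs_of_pos ht]
      nlinarith
    have hyn : 1 - t ≤ ‖y‖ := by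
      have h2 := norm_sub_norm_le u (-(t • S u))
      rw [sub_neg_eq_add, norm_neg] at h2
      rw [hun] at h2
      linarith
    have hy0 : y ≠ 0 := by
      intro h
      rw [h, norm_zero] at hyn
      linarith
    obtain ⟨g, hg1, hgy⟩ := exists_dual_vector ℝ y (norm_ne_zero_iff.mpr hy0)
    have hgy' : g y = ‖y‖ := by exact_mod_cast hgy
    have hyp : (0 : ℝ) < ‖y‖ := by linarith
    set z : X := ‖y‖⁻¹ • y with hz
    have hzn : ‖z‖ = 1 := by
      rw [hz, norm_smul, Real.norm_eq_abs, abs_of_pos (inv_pos.mpr hyp),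
        inv_mul_cancel₀ hyp.ne']
    have hgz : g z = 1 := by
      rw [hz, map_smul, smul_eq_mul, hgy', inv_mul_cancel₀ hyp.ne']
    have huy : ‖u - y‖ ≤ t := by
      have h : u - y = -(t • S u) := by rw [hy]; abel
      rw [h, norm_neg]; exact htSu
    have hyz : ‖y - z‖ ≤ t := by
      have h1 : y - z = (1 - ‖y‖⁻¹) • y := by rw [hz, sub_smul, one_smul]
      have h2 : ‖y - z‖ = |‖y‖ - 1| := by
        rw [h1, norm_smul, Real.norm_eq_abs]
        rw [show |1 - ‖y‖⁻¹| * ‖y‖ = |(1 - ‖y‖⁻¹) * ‖y‖| by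
          rw [abs_mul, abs_of_pos hyp]]
        congr 1
        field_simp
      have h3 : |‖y‖ - 1| ≤ ‖y - u‖ := by
        have h4 := abs_norm_sub_norm_le y u
        rwa [hun] at h4
      rw [h2]
      calc |‖y‖ - 1| ≤ ‖y - u‖ := h3
        _ = ‖u - y‖ := norm_sub_rev _ _
        _ ≤ t := huy
    have huz : ‖u - z‖ ≤ 2 * t := by
      calc ‖u - z‖ = ‖(u - y) + (y - z)‖ := by abel_nf
        _ ≤ ‖u - y‖ + ‖y - z‖ := norm_add_le _ _
        _ ≤ 2 * t := by linarith
    have hgs : g (S u) ≤ ρ + 2 * t := by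
      have hdec : S u = S z + S (u - z) := by
        rw [← map_add]; congr 1; abel
      have h5 : g (S (u - z)) ≤ 2 * t := by
        calc g (S (u - z)) ≤ ‖g‖ * ‖S (u - z)‖ := dual_pair_bound g _
          _ = ‖S (u - z)‖ := by rw [hg1, one_mul]
          _ ≤ ‖S‖ * ‖u - z‖ := S.le_opNorm _
          _ ≤ 1 * (2 * t) := mul_le_mul hS huz (norm_nonneg _) zero_le_one
          _ = 2 * t := one_mul _
      have h6 : g (S z) ≤ ρ := hSv z g hzn hg1 hgz
      calc g (S u) = g (S z) + g (S (u - z)) := by rw [hdec, map_add]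
        _ ≤ ρ + 2 * t := add_le_add h6 h5
    have hgu : g u ≤ 1 := by
      calc g u ≤ ‖g‖ * ‖u‖ := dual_pair_bound g u
        _ = 1 := by rw [hg1, hun, mul_one]
    have e1 : g (t • S u) = t * g (S u) := by simp
    have hval : ‖y‖ = g u + t * g (S u) := by
      rw [← hgy', hy, map_add, e1]
    calc ‖y‖ = g u + t * g (S u) := hval
      _ ≤ 1 + t * (ρ + 2 * t) := by nlinarith
  have h1 : (‖x‖ : ℝ) • u = x := by
    rw [hu, smul_smul, mul_inv_cancel₀ hxn.ne', one_smul]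
  have hSx : (‖x‖ : ℝ) • S u = S x := by rw [← map_smul, h1]
  have hscale : x + t • S x = ‖x‖ • (u + t • S u) := by
    rw [smul_add, h1, smul_comm (‖x‖ : ℝ) t, hSx]
  rw [hscale, norm_smul, Real.norm_eq_abs, abs_of_pos hxn, mul_comm]
  exact mul_le_mul_of_nonneg_right main hxn.le

end Aux

section Ultrapower

variable {X : Type*} [NormedAddCommGroup X] [NormedSpace ℝ X] (U : Ultrafilter ℕ)

lemma mem_nullIdeal_iff (f : lp (fun _ : ℕ => X) ∞) :
    f ∈ nullIdeal (fun _ => X) U ↔ Tendsto (fun n => ‖f n‖) (U : Filter ℕ) (nhds 0) :=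
  Iff.rfl

/-- pointwise application of an operator on `ℓ∞(X)`. -/
noncomputable def ptApply (T : X →L[ℝ] X) (f : lp (fun _ : ℕ => X) ∞) :
    lp (fun _ : ℕ => X) ∞ :=
  ⟨fun n => T (f n), memℓp_infty ⟨‖T‖ * ‖f‖, by
    rintro a ⟨n, rfl⟩
    exact (T.le_opNorm _).trans
      (mul_le_mul_of_nonneg_left (lp.norm_apply_le_norm ENNReal.top_ne_zero f n)
        (norm_nonneg T))⟩⟩

@[simp] lemma ptApply_coe (T : X →L[ℝ] X) (f : lp (fun _ : ℕ => X) ∞) (n : ℕ) :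
    (ptApply T f) n = T (f n) := rfl

lemma ptApply_norm_le (T : X →L[ℝ] X) (f : lp (fun _ : ℕ => X) ∞) :
    ‖ptApply T f‖ ≤ ‖T‖ * ‖f‖ := by
  apply lp.norm_le_of_forall_le'
  intro n
  exact (T.le_opNorm _).trans
    (mul_le_mul_of_nonneg_left (lp.norm_apply_le_norm ENNReal.top_ne_zero f n) (norm_nonneg T))

/-- pointwise application as a linear map. -/
noncomputable def ptL (T : X →L[ℝ] X) :
    lp (fun _ : ℕ => X) ∞ →ₗ[ℝ] lp (fun _ : ℕ => X) ∞ where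
  toFun := ptApply T
  map_add' f g := by
    apply lp.ext
    funext n
    simp [lp.coeFn_add]
  map_smul' c f := by
    apply lp.ext
    funext n
    simp [lp.coeFn_smul]

lemma ptL_maps_null (T : X →L[ℝ] X) {f : lp (fun _ : ℕ => X) ∞}
    (hf : f ∈ nullIdeal (fun _ => X) U) : ptApply T f ∈ nullIdeal (fun _ => X) U := by
  rw [mem_nullIdeal_iff] at hf ⊢
  have h := hf.const_mul ‖T‖
  rw [mul_zero] at h
  refine squeeze_zero (fun n => norm_nonneg _) (fun n => ?_) h
  simpa using T.le_opNorm (f n)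

/-- The induced linear map on the ultrapower. -/
noncomputable def opUL (T : X →L[ℝ] X) :
    (lp (fun _ : ℕ => X) ∞ ⧸ nullIdeal (fun _ => X) U) →ₗ[ℝ]
      (lp (fun _ : ℕ => X) ∞ ⧸ nullIdeal (fun _ => X) U) :=
  (nullIdeal (fun _ => X) U).liftQ
    (((nullIdeal (fun _ => X) U).mkQ).comp (ptL T)) (by
      intro f hf
      simp only [LinearMap.mem_ker, LinearMap.comp_apply, Submodule.mkQ_apply,
        Submodule.Quotient.mk_eq_zero]
      exact ptL_maps_null U T hf)

lemma opUL_mk (T : X →L[ℝ] X) (f : lp (fun _ : ℕ => X) ∞) :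
    opUL U T (Submodule.Quotient.mk f) = Submodule.Quotient.mk (ptApply T f) := rfl

lemma opUL_norm (T : X →L[ℝ] X)
    (q : lp (fun _ : ℕ => X) ∞ ⧸ nullIdeal (fun _ => X) U) :
    ‖opUL U T q‖ ≤ ‖T‖ * ‖q‖ := by
  refine le_of_forall_pos_le_add fun ε hε => ?_
  have hε' : 0 < ε / (‖T‖ + 1) := by positivity
  obtain ⟨m, hm, hmlt⟩ := Submodule.Quotient.norm_mk_lt q hε'
  rw [← hm, opUL_mk]
  have h1 : ‖(Submodule.Quotient.mk (ptApply T m) :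
      lp (fun _ : ℕ => X) ∞ ⧸ nullIdeal (fun _ => X) U)‖ ≤ ‖ptApply T m‖ :=
    Submodule.Quotient.norm_mk_le _ _
  have h2 := ptApply_norm_le T m
  rw [← hm] at hmlt
  have h3 : ‖T‖ * ‖m‖ ≤ ‖T‖ * (‖(Submodule.Quotient.mk m : _)‖ + ε / (‖T‖ + 1)) :=
    mul_le_mul_of_nonneg_left hmlt.le (norm_nonneg T)
  have h4 : ‖T‖ * (ε / (‖T‖ + 1)) ≤ ε := by
    rw [mul_comm, div_mul_eq_mul_div, div_le_iff₀ (by positivity : (0:ℝ) < ‖T‖ + 1)]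
    nlinarith [norm_nonneg T]
  nlinarith [norm_nonneg T]

/-- The induced operator on the ultrapower. -/
noncomputable def opU (T : X →L[ℝ] X) :
    (lp (fun _ : ℕ => X) ∞ ⧸ nullIdeal (fun _ => X) U) →L[ℝ]
      (lp (fun _ : ℕ => X) ∞ ⧸ nullIdeal (fun _ => X) U) :=
  LinearMap.mkContinuous (opUL U T) ‖T‖ (opUL_norm U T)

lemma opU_mk (T : X →L[ℝ] X) (f : lp (fun _ : ℕ => X) ∞) :
    opU U T (Submodule.Quotient.mk f) = Submodule.Quotient.mk (ptApply T f) := rfl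

lemma opU_norm_le (T : X →L[ℝ] X) : ‖opU U T‖ ≤ ‖T‖ :=
  LinearMap.mkContinuous_norm_le _ (norm_nonneg T) _

lemma opU_one_add_smul (T : X →L[ℝ] X) (t : ℝ) :
    (1 : _ →L[ℝ] _) + t • opU U T = opU U (1 + t • T) := by
  ext q
  obtain ⟨f, rfl⟩ := Submodule.Quotient.mk_surjective _ q
  have h1 : ptApply (1 + t • T) f = f + t • ptApply T f := by
    apply lp.ext
    funext n
    simp [lp.coeFn_add, lp.coeFn_smul, ContinuousLinearMap.add_apply]
    rfl
  simp only [ContinuousLinearMap.add_apply, ContinuousLinearMap.smul_apply,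
    ContinuousLinearMap.one_apply, opU_mk, h1]
  rw [Submodule.Quotient.mk_add, Submodule.Quotient.mk_smul]

lemma opU_neg (T : X →L[ℝ] X) : opU U (-T) = -(opU U T) := by
  ext q
  obtain ⟨f, rfl⟩ := Submodule.Quotient.mk_surjective _ q
  have h1 : ptApply (-T) f = -(ptApply T f) := by
    apply lp.ext
    funext n
    simp
  simp only [ContinuousLinearMap.neg_apply, opU_mk, h1]
  rw [Submodule.Quotient.mk_neg]

/-- The constant sequence. -/
noncomputable def constLp (x : X) : lp (fun _ : ℕ => X) ∞ :=
  ⟨fun _ => x, memℓp_infty ⟨‖x‖, by rintro a ⟨n, rfl⟩; exact le_rfl⟩⟩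

@[simp] lemma constLp_coe (x : X) (n : ℕ) : (constLp x) n = x := rfl

lemma constLp_norm_le (x : X) : ‖constLp x‖ ≤ ‖x‖ :=
  lp.norm_le_of_forall_le' _ fun _ => le_rfl

lemma le_norm_mk_constLp (x : X) :
    ‖x‖ ≤ ‖(Submodule.Quotient.mk (constLp x) :
      lp (fun _ : ℕ => X) ∞ ⧸ nullIdeal (fun _ => X) U)‖ := by
  by_contra h
  push_neg at h
  obtain ⟨m, hm, hmlt⟩ := Submodule.Quotient.norm_mk_lt
    (Submodule.Quotient.mk (constLp x) :
      lp (fun _ : ℕ => X) ∞ ⧸ nullIdeal (fun _ => X) U)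
    (sub_pos.mpr h)
  have hmem : m - constLp x ∈ nullIdeal (fun _ => X) U :=
    (Submodule.Quotient.eq _).mp hm
  rw [mem_nullIdeal_iff] at hmem
  have hmx : ‖m‖ < ‖x‖ := by linarith
  have hev : ∀ᶠ n in (U : Filter ℕ), ‖(m - constLp x) n‖ < ‖x‖ - ‖m‖ :=
    hmem.eventually_lt_const (by linarith : (0:ℝ) < ‖x‖ - ‖m‖)
  obtain ⟨n, hn⟩ := hev.exists
  have h5 : (m - constLp x) n = m n - x := by simp [lp.coeFn_sub]
  have h6 : ‖m n‖ ≤ ‖m‖ := lp.norm_apply_le_norm ENNReal.top_ne_zero m n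
  have h7 : ‖x‖ - ‖m n‖ ≤ ‖(m - constLp x) n‖ := by
    rw [h5, norm_sub_rev]
    exact norm_sub_norm_le x (m n)
  linarith

lemma opU_norm_eq (T : X →L[ℝ] X) (hT : ‖T‖ = 1) : ‖opU U T‖ = 1 := by
  refine le_antisymm ((opU_norm_le U T).trans_eq hT) ?_
  refine le_of_forall_pos_le_add fun ε hε => ?_
  rcases le_or_gt 1 ε with h1ε | h1ε
  · linarith [norm_nonneg (opU U T)]
  have hne : ¬ (∀ x : X, ‖T x‖ ≤ (1 - ε) * ‖x‖) := by
    intro hall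
    have := ContinuousLinearMap.opNorm_le_bound T (by linarith) hall
    rw [hT] at this
    linarith
  push_neg at hne
  obtain ⟨x, hx⟩ := hne
  have hx0 : x ≠ 0 := by
    intro h
    rw [h] at hx
    simp at hx
  have hxn : (0 : ℝ) < ‖x‖ := norm_pos_iff.mpr hx0
  set u : X := ‖x‖⁻¹ • x with hu
  have hun : ‖u‖ = 1 := by
    rw [hu, norm_smul, Real.norm_eq_abs, abs_of_pos (inv_pos.mpr hxn),
      inv_mul_cancel₀ hxn.ne']
  have hTu : 1 - ε < ‖T u‖ := by
    have heq : ‖T u‖ = ‖x‖⁻¹ * ‖T x‖ := by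
      rw [hu, map_smul, norm_smul, Real.norm_eq_abs, abs_of_pos (inv_pos.mpr hxn)]
    rw [heq, ← div_eq_inv_mul, lt_div_iff₀ hxn]
    linarith
  have hq1 : ‖(Submodule.Quotient.mk (constLp u) :
      lp (fun _ : ℕ => X) ∞ ⧸ nullIdeal (fun _ => X) U)‖ ≤ 1 :=
    (Submodule.Quotient.norm_mk_le _ _).trans ((constLp_norm_le u).trans_eq hun)
  have h2 : opU U T (Submodule.Quotient.mk (constLp u)) =
      Submodule.Quotient.mk (constLp (T u)) := by
    rw [opU_mk]
    rfl
  have h3 : ‖T u‖ ≤ ‖opU U T (Submodule.Quotient.mk (constLp u))‖ := by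
    rw [h2]
    exact le_norm_mk_constLp U (T u)
  have h4 : ‖opU U T (Submodule.Quotient.mk (constLp u))‖ ≤ ‖opU U T‖ := by
    calc ‖opU U T (Submodule.Quotient.mk (constLp u))‖
        ≤ ‖opU U T‖ * ‖(Submodule.Quotient.mk (constLp u) :
          lp (fun _ : ℕ => X) ∞ ⧸ nullIdeal (fun _ => X) U)‖ :=
          (opU U T).le_opNorm _
      _ ≤ ‖opU U T‖ * 1 := mul_le_mul_of_nonneg_left hq1 (ContinuousLinearMap.opNorm_nonneg _)
      _ = ‖opU U T‖ := mul_one _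
  linarith

lemma opU_state_bound (S : X →L[ℝ] X) (hS : ‖S‖ ≤ 1) {ρ : ℝ} (hρ : 0 ≤ ρ)
    (hSv : ∀ (z : X) (g : X →L[ℝ] ℝ), ‖z‖ = 1 → ‖g‖ = 1 → g z = 1 → g (S z) ≤ ρ)
    (xh : lp (fun _ : ℕ => X) ∞ ⧸ nullIdeal (fun _ => X) U)
    (fh : (lp (fun _ : ℕ => X) ∞ ⧸ nullIdeal (fun _ => X) U) →L[ℝ] ℝ)
    (hx : ‖xh‖ = 1) (hf : ‖fh‖ = 1) (hfx : fh xh = 1) :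
    fh (opU U S xh) ≤ ρ := by
  refine le_of_forall_pos_le_add fun ε hε => ?_
  set t : ℝ := min (ε / 2) (1 / 2) with htdef
  have ht : 0 < t := lt_min (by linarith) (by norm_num)
  have ht' : t ≤ 1 / 2 := min_le_right _ _
  have h2t : 2 * t ≤ ε := by
    have := min_le_left (ε / 2) (1 / 2)
    linarith
  set A : (lp (fun _ : ℕ => X) ∞ ⧸ nullIdeal (fun _ => X) U) →L[ℝ]
      (lp (fun _ : ℕ => X) ∞ ⧸ nullIdeal (fun _ => X) U) :=
    (1 : (lp (fun _ : ℕ => X) ∞ ⧸ nullIdeal (fun _ => X) U) →L[ℝ]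
      (lp (fun _ : ℕ => X) ∞ ⧸ nullIdeal (fun _ => X) U)) + t • opU U S with hA
  have hb : ‖A‖ ≤ 1 + t * (ρ + 2 * t) := by
    rw [hA, opU_one_add_smul]
    exact (opU_norm_le U _).trans (norm_one_add_smul_le S hS hρ ht ht' hSv)
  have hval : fh (A xh) = 1 + t * fh (opU U S xh) := by
    rw [hA]
    simp [ContinuousLinearMap.add_apply, hfx]
  have hle : fh (A xh) ≤ 1 + t * (ρ + 2 * t) := by
    calc fh (A xh)
        ≤ ‖fh‖ * ‖A xh‖ := dual_pair_bound fh _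
      _ ≤ ‖fh‖ * (‖A‖ * ‖xh‖) := by
          gcongr
          exact ContinuousLinearMap.le_opNorm _ _
      _ = ‖A‖ := by rw [hf, hx]; ring
      _ ≤ 1 + t * (ρ + 2 * t) := hb
  rw [hval] at hle
  have h7 : fh (opU U S xh) ≤ ρ + 2 * t := by
    have := (mul_le_mul_iff_right₀ ht).mp (by linarith : t * fh (opU U S xh) ≤ t * (ρ + 2 * t))
    exact this
  linarith

lemma nradius_opU_le (T : X →L[ℝ] X) (hT : ‖T‖ = 1) :
    nradius (opU (X := X) U T) ≤ nradius T := by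
  apply Real.sSup_le _ (nradius_nonneg T)
  rintro r ⟨xh, fh, hx, hf, hfx, rfl⟩
  have h1 : fh (opU U T xh) ≤ nradius T :=
    opU_state_bound U T hT.le (nradius_nonneg T)
      (fun z g hz hg hgz => (le_abs_self _).trans (abs_le_nradius T hz hg hgz))
      xh fh hx hf hfx
  have h2 : fh (opU U (-T) xh) ≤ nradius T :=
    opU_state_bound U (-T) (by rw [norm_neg, hT]) (nradius_nonneg T)
      (fun z g hz hg hgz => by
        rw [ContinuousLinearMap.neg_apply, map_neg]
        exact (neg_le_abs _).trans (abs_le_nradius T hz hg hgz))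
      xh fh hx hf hfx
  rw [opU_neg] at h2
  rw [ContinuousLinearMap.neg_apply, map_neg] at h2
  exact abs_le.mpr ⟨by linarith, h1⟩

end Ultrapower

lemma nindex_of_subsingleton (E : Type*) [SeminormedAddCommGroup E] [NormedSpace ℝ E]
    [Subsingleton E] : nindex E = 0 := by
  unfold nindex
  have hempty : {r : ℝ | ∃ T : E →L[ℝ] E, ‖T‖ = 1 ∧ r = nradius T} = ∅ := by
    rw [Set.eq_empty_iff_forall_notMem]
    rintro r ⟨T, hT, _⟩
    have hzero : ‖T‖ = 0 := by
      refine le_antisymm (ContinuousLinearMap.opNorm_le_bound _ le_rfl fun x => ?_)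
        (norm_nonneg T)
      rw [Subsingleton.elim (T x) 0, norm_zero, zero_mul]
    rw [hzero] at hT
    norm_num at hT
  rw [hempty, Real.sInf_empty]

theorem ultrapower_nindex_le
    (X : Type*) [NormedAddCommGroup X] [NormedSpace ℝ X] [CompleteSpace X]
    (U : Ultrafilter ℕ) (hU : (U : Filter ℕ) ≤ Filter.cofinite) :
    nindex (lp (fun _ : ℕ => X) ∞ ⧸ nullIdeal (fun _ => X) U) ≤ nindex X := by
  rcases subsingleton_or_nontrivial X with hX | hX
  · haveI : Subsingleton (lp (fun _ : ℕ => X) ∞) :=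
      ⟨fun a b => lp.ext (funext fun n => Subsingleton.elim _ _)⟩
    haveI : Subsingleton (lp (fun _ : ℕ => X) ∞ ⧸ nullIdeal (fun _ => X) U) := by
      constructor
      intro a b
      obtain ⟨f, rfl⟩ := Submodule.Quotient.mk_surjective _ a
      obtain ⟨g, rfl⟩ := Submodule.Quotient.mk_surjective _ b
      rw [Subsingleton.elim f g]
    rw [nindex_of_subsingleton, nindex_of_subsingleton]
  · have hne : {r : ℝ | ∃ T : X →L[ℝ] X, ‖T‖ = 1 ∧ r = nradius T}.Nonempty :=
      ⟨nradius (1 : X →L[ℝ] X), 1, norm_one, rfl⟩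
    refine le_csInf hne ?_
    rintro b ⟨T, hT, rfl⟩
    have hmem : nradius (opU (X := X) U T) ∈
        {r : ℝ | ∃ S : (lp (fun _ : ℕ => X) ∞ ⧸ nullIdeal (fun _ => X) U) →L[ℝ]
          (lp (fun _ : ℕ => X) ∞ ⧸ nullIdeal (fun _ => X) U), ‖S‖ = 1 ∧ r = nradius S} :=
      ⟨opU U T, opU_norm_eq U T hT, rfl⟩
    have hbdd : BddBelow {r : ℝ | ∃ S : (lp (fun _ : ℕ => X) ∞ ⧸
        nullIdeal (fun _ => X) U) →L[ℝ]
          (lp (fun _ : ℕ => X) ∞ ⧸ nullIdeal (fun _ => X) U), ‖S‖ = 1 ∧ r = nradius S} := by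
      refine ⟨0, ?_⟩
      rintro r ⟨S, _, rfl⟩
      exact nradius_nonneg S
    exact (csInf_le hbdd hmem).trans (nradius_opU_le U T hT)
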